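/- Let H0, H* ∈ H^stub_s(d) with E(M(H0 Δ H*)) = k+1 ≥ 5, and suppose M(H0 Δ H*) consists of exactly one minimal alternating cycle C* containing an alternating subtrail (e1, e2, e3) with e1 = {a,b}_{H0,t}, e2 = {b,c}_{H*,t}, e3 = {c,d}_{H0,s} and a ≠ d. If the hyperarc (s,{a,d}) belongs to neither A(H0) nor A(H*), then the hypergraph H̃ with A(H̃) = (A(H0) \ {M⁻¹(e1), M⁻¹(e3)}) ∪ {M⁻¹(e2), (s,{a,d})} satisfies: H̃ ∈ H^stub_s(d), E(M(H0 Δ H̃)) ≤ k, and E(M(H̃ Δ H*)) = k−1. -/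

import Mathlib

open Finset

/-!
Common setting: fix a vertex set `V` and two tail labels `τ, σ`, encoded as
`Bool` with `true = τ` and `false = σ`.  A hyperarc is a pair `(t, {a,b})`
consisting of a tail label and an unordered pair of vertices; it is degenerate
if `a = b`.  A hypergraph is a finite set of pairwise distinct non-degenerate
hyperarcs; `H^stub_s(d)` is the set of such hypergraphs realizing the degree
sequence `d` (stub degree of each vertex and number of hyperarcs per tail).
`M(H0 Δ H*)` is the edge-labeled multigraph whose edges record the hyperarcs
of the symmetric difference together with the hypergraph (`lab`, `true = H0`)
containing them and their tail.
-/

/-- Tail labels: `true = τ`, `false = σ`. -/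
abbrev Tail := Bool

/-- A hyperarc: a tail label together with an unordered pair of vertices. -/
abbrev Hyperarc (V : Type*) := Tail × Sym2 V

/-- A (stub) degree sequence: the stub degree of every vertex together with the
number of hyperarcs carrying each tail label. -/
structure DegreeSeq (V : Type*) where
  vdeg : V → ℕ
  tdeg : Tail → ℕ

/-- `A` is a hypergraph in `H^stub_s(d)`: a set of pairwise distinct (this is
automatic for a `Finset`) non-degenerate hyperarcs realizing the degree
sequence `D`. -/
def Realizes {V : Type*} [DecidableEq V] (A : Finset (Hyperarc V)) (D : DegreeSeq V) : Prop :=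
  (∀ e ∈ A, ¬ e.2.IsDiag) ∧
  (∀ v : V, (A.filter fun e => v ∈ e.2).card = D.vdeg v) ∧
  (∀ t : Tail, (A.filter fun e => e.1 = t).card = D.tdeg t)

/-- An edge `{a,b}_{X,t}` of the multigraph `M(H0 Δ H*)`: its label (`true`
means it comes from `H0`, `false` from `H*`), its tail `t` and its endpoints
`{a,b}`. -/
structure MEdge (V : Type*) where
  lab : Bool
  tail : Tail
  ends : Sym2 V
deriving DecidableEq

/-- `M⁻¹`: the hyperarc underlying an edge of `M(H0 Δ H*)`. -/
def MEdge.arc {V : Type*} (e : MEdge V) : Hyperarc V := (e.tail, e.ends)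

/-- The edge set of the edge-labeled multigraph `M(H0 Δ H*)`: every hyperarc of
`A(H0) \ A(H*)` becomes an edge labeled `H0` (i.e. `true`) and every hyperarc of
`A(H*) \ A(H0)` becomes an edge labeled `H*` (i.e. `false`). -/
def mEdges {V : Type*} [DecidableEq V] (A0 A1 : Finset (Hyperarc V)) : Finset (MEdge V) :=
  ((A0 \ A1).image fun h => ⟨true, h.1, h.2⟩) ∪
    ((A1 \ A0).image fun h => ⟨false, h.1, h.2⟩)

/-- An alternating cycle in the edge set `E` of `M(H0 Δ H*)`: a closed trail
(cyclic sequence of pairwise distinct edges, consecutive edges sharing an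
endpoint) whose edges alternate between label `H0` and label `H*`. -/
structure AltCycle {V : Type*} (E : Finset (MEdge V)) where
  /-- the length of the cycle -/
  n : ℕ
  two_le : 2 ≤ n
  /-- the cyclic sequence of edges -/
  edge : ℕ → MEdge V
  /-- the cyclic sequence of vertices visited -/
  vert : ℕ → V
  edge_periodic : ∀ i, edge (i + n) = edge i
  vert_periodic : ∀ i, vert (i + n) = vert i
  mem : ∀ i, edge i ∈ E
  inj : ∀ i < n, ∀ j < n, edge i = edge j → i = j
  ends_eq : ∀ i, (edge i).ends = s(vert i, vert (i + 1))
  alt : ∀ i, (edge i).lab = !(edge (i + 1)).lab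

/-- The set of edges used by an alternating cycle. -/
def AltCycle.edges {V : Type*} [DecidableEq V] {E : Finset (MEdge V)} (C : AltCycle E) :
    Finset (MEdge V) :=
  (Finset.range C.n).image C.edge

/-- A minimal alternating cycle: one containing no proper alternating subcycle. -/
def AltCycle.Minimal {V : Type*} [DecidableEq V] {E : Finset (MEdge V)} (C : AltCycle E) : Prop :=
  ∀ C' : AltCycle E, C'.edges ⊆ C.edges → C'.edges = C.edges

/-- `|f_{X,t}(M(H0 Δ H*))|`: the number of edges of `M(H0 Δ H*)` labeled with
hypergraph `l` (`true = H0`) and tail `t`. -/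
def labTailCount {V : Type*} [DecidableEq V] (A0 A1 : Finset (Hyperarc V))
    (l : Bool) (t : Tail) : ℕ :=
  ((mEdges A0 A1).filter fun e => e.lab = l ∧ e.tail = t).card

/-- `H` and `H'` differ by a single hypershuffle move, i.e. they are adjacent in
`G(H^stub_s(d))`: their symmetric difference consists of 4 hyperarcs,
`M(H Δ H')` is an alternating cycle, and the number of tail-τ edges labeled `H`
equals the number of tail-τ edges labeled `H'`. -/
def HypershuffleAdj {V : Type*} [DecidableEq V] (A0 A1 : Finset (Hyperarc V)) : Prop :=
  ((A0 \ A1) ∪ (A1 \ A0)).card = 4 ∧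
  (∃ C : AltCycle (mEdges A0 A1), C.edges = mEdges A0 A1) ∧
  labTailCount A0 A1 true true = labTailCount A0 A1 false true

lemma mEdges_card {V : Type*} [DecidableEq V] (A B : Finset (Hyperarc V)) :
    (mEdges A B).card = (A \ B).card + (B \ A).card := by
  have hinj : ∀ l : Bool, Function.Injective (fun h : Hyperarc V => (⟨l, h.1, h.2⟩ : MEdge V)) := by
    intro l x y h
    simp only [MEdge.mk.injEq] at h
    exact Prod.ext h.2.1 h.2.2
  rw [mEdges, Finset.card_union_of_disjoint, Finset.card_image_of_injective _ (hinj true),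
    Finset.card_image_of_injective _ (hinj false)]
  rw [Finset.disjoint_left]
  rintro e he he'
  simp only [Finset.mem_image] at he he'
  obtain ⟨x, -, rfl⟩ := he
  obtain ⟨y, -, hy⟩ := he'
  simp at hy

lemma arc_mem_mEdges {V : Type*} [DecidableEq V] {A B : Finset (Hyperarc V)} {l : Bool}
    {tl : Tail} {p : Sym2 V} (h : (⟨l, tl, p⟩ : MEdge V) ∈ mEdges A B) :
    (l = true → (tl, p) ∈ A \ B) ∧ (l = false → (tl, p) ∈ B \ A) := by
  simp only [mEdges, Finset.mem_union, Finset.mem_image] at h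
  constructor <;> rintro rfl <;>
    rcases h with ⟨x, hx, hx2⟩ | ⟨x, hx, hx2⟩ <;>
    simp only [MEdge.mk.injEq] at hx2 <;> first
      | (obtain ⟨-, h1, h2⟩ := hx2; cases x; subst h1; subst h2; exact hx)
      | (exact absurd hx2.1 (by simp))

lemma shuffle_filter_card {V : Type*} [DecidableEq V] (A0 : Finset (Hyperarc V))
    (x1 x2 x3 x4 : Hyperarc V)
    (h1 : x1 ∈ A0) (h3 : x3 ∈ A0) (h2 : x2 ∉ A0) (h4 : x4 ∉ A0)
    (h13 : x1 ≠ x3) (h24 : x2 ≠ x4)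
    (p : Hyperarc V → Prop) [DecidablePred p]
    (hp : (if p x1 then 1 else 0) + (if p x3 then 1 else 0)
        = (if p x2 then 1 else 0) + (if p x4 then 1 else 0)) :
    (((A0 \ {x1, x3}) ∪ {x2, x4}).filter p).card = (A0.filter p).card := by
  have hsub : ({x1, x3} : Finset (Hyperarc V)) ⊆ A0 := by
    simp [Finset.insert_subset_iff, h1, h3]
  have hdisj : Disjoint (A0 \ {x1, x3}) ({x2, x4} : Finset (Hyperarc V)) := by
    rw [Finset.disjoint_left]
    intro y hy hy'
    simp only [Finset.mem_sdiff] at hy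
    simp only [Finset.mem_insert, Finset.mem_singleton] at hy'
    rcases hy' with rfl | rfl
    exacts [h2 hy.1, h4 hy.1]
  rw [Finset.filter_union, Finset.card_union_of_disjoint
    (Finset.disjoint_filter_filter hdisj)]
  have hsd : (A0 \ {x1, x3}).filter p = (A0.filter p) \ (({x1, x3} : Finset _).filter p) := by
    ext y
    simp only [Finset.mem_filter, Finset.mem_sdiff]
    tauto
  rw [hsd, Finset.card_sdiff_of_subset (Finset.filter_subset_filter p hsub)]
  have c13 : (({x1, x3} : Finset (Hyperarc V)).filter p).card
      = (if p x1 then 1 else 0) + (if p x3 then 1 else 0) := by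
    rw [Finset.card_filter, Finset.sum_pair h13]
  have c24 : (({x2, x4} : Finset (Hyperarc V)).filter p).card
      = (if p x2 then 1 else 0) + (if p x4 then 1 else 0) := by
    rw [Finset.card_filter, Finset.sum_pair h24]
  have hle := Finset.card_le_card (Finset.filter_subset_filter p hsub)
  rw [c13, hp, ← c24] at hle ⊢
  exact Nat.sub_add_cancel hle
/-- Case 2 of the proof of Lemma `connected_when_one_cycle`.
`M(H0 Δ H*)` has `k + 1 ≥ 5` edges and is exactly one minimal alternating cycle
`C*` with subtrail `(e1, e2, e3)`, `e1 = {a,b}_{H0,t}`, `e2 = {b,c}_{H*,t}`,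
`e3 = {c,d}_{H0,s}`, `a ≠ d`.  If `(s,{a,d}) ∉ A(H0) ∪ A(H*)`, then `H̃` with
`A(H̃) = (A(H0) \ {M⁻¹(e1), M⁻¹(e3)}) ∪ {M⁻¹(e2), (s,{a,d})}` satisfies
`H̃ ∈ H^stub_s(d)`, `E(M(H0 Δ H̃)) ≤ k` and `E(M(H̃ Δ H*)) = k − 1`. -/
theorem one_cycle_case2 {V : Type*} [DecidableEq V]
    (D : DegreeSeq V) (A0 A1 : Finset (Hyperarc V))
    (h0 : Realizes A0 D) (h1 : Realizes A1 D) (k : ℕ)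
    (hcard : (mEdges A0 A1).card = k + 1) (hk : 5 ≤ k + 1)
    (C : AltCycle (mEdges A0 A1)) (hmin : C.Minimal) (hall : C.edges = mEdges A0 A1)
    (a b c d : V) (t s : Tail) (i : ℕ)
    (he1 : C.edge i = ⟨true, t, s(a, b)⟩)
    (he2 : C.edge (i + 1) = ⟨false, t, s(b, c)⟩)
    (he3 : C.edge (i + 2) = ⟨true, s, s(c, d)⟩)
    (had : a ≠ d)
    (he4 : (s, s(a, d)) ∉ A0 ∪ A1)
    (At : Finset (Hyperarc V))
    (hAt : At = (A0 \ {(t, s(a, b)), (s, s(c, d))}) ∪ {(t, s(b, c)), (s, s(a, d))}) :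
    Realizes At D ∧ (mEdges A0 At).card ≤ k ∧ (mEdges At A1).card = k - 1 := by
  classical
  -- memberships of the four arcs
  have m1 : (t, s(a, b)) ∈ A0 \ A1 :=
    (arc_mem_mEdges (by rw [← he1]; exact C.mem i)).1 rfl
  have m2 : (t, s(b, c)) ∈ A1 \ A0 :=
    (arc_mem_mEdges (by rw [← he2]; exact C.mem (i + 1))).2 rfl
  have m3 : (s, s(c, d)) ∈ A0 \ A1 :=
    (arc_mem_mEdges (by rw [← he3]; exact C.mem (i + 2))).1 rfl
  simp only [Finset.mem_sdiff] at m1 m2 m3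
  simp only [Finset.mem_union] at he4
  push_neg at he4
  obtain ⟨h4n0, h4n1⟩ := he4
  -- basic disequalities
  have hab : a ≠ b := fun h => h0.1 _ m1.1 (by simp [h])
  have hbc : b ≠ c := fun h => h1.1 _ m2.1 (by simp [h])
  have hcd : c ≠ d := fun h => h0.1 _ m3.1 (by simp [h])
  -- the cycle has at least 5 edges
  have hn5 : 5 ≤ C.n := by
    have h1' : C.edges.card = k + 1 := by rw [hall, hcard]
    have h2' : C.edges.card ≤ C.n := by
      simpa [AltCycle.edges] using Finset.card_image_le (s := Finset.range C.n) (f := C.edge)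
    omega
  -- e1 and e3 are distinct hyperarcs
  have hne13 : (t, s(a, b)) ≠ (s, s(c, d)) := by
    intro h
    simp only [Prod.mk.injEq] at h
    have hedge : C.edge i = C.edge (i + 2) := by rw [he1, he3, h.1, h.2]
    have hper : Function.Periodic C.edge C.n := C.edge_periodic
    have hmm : C.edge (i % C.n) = C.edge ((i + 2) % C.n) := by
      rw [hper.map_mod_nat, hper.map_mod_nat, hedge]
    have heq := C.inj _ (Nat.mod_lt _ (by omega)) _ (Nat.mod_lt _ (by omega)) hmm
    have hdvd : C.n ∣ 2 := by
      have : Nat.ModEq C.n i (i + 2) := heq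
      simpa using (Nat.modEq_iff_dvd' (by omega)).mp this
    have := Nat.le_of_dvd (by norm_num) hdvd
    omega
  have hne24 : (t, s(b, c)) ≠ (s, s(a, d)) := fun h => h4n1 (h ▸ m2.1)
  -- the four key set identities
  have hA0At : A0 \ At = {(t, s(a, b)), (s, s(c, d))} := by
    ext x
    simp only [hAt, Finset.mem_sdiff, Finset.mem_union, Finset.mem_insert,
      Finset.mem_singleton]
    constructor
    · rintro ⟨hx0, hx⟩
      by_contra hne
      push_neg at hne
      exact hx (Or.inl ⟨hx0, fun h => h.elim hne.1 hne.2⟩)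
    · rintro (rfl | rfl)
      · refine ⟨m1.1, ?_⟩
        rintro (⟨-, h⟩ | h | h)
        · exact h (Or.inl rfl)
        · exact m2.2 (h ▸ m1.1)
        · exact h4n0 (h ▸ m1.1)
      · refine ⟨m3.1, ?_⟩
        rintro (⟨-, h⟩ | h | h)
        · exact h (Or.inr rfl)
        · exact m2.2 (h ▸ m3.1)
        · exact h4n0 (h ▸ m3.1)
  have hAtA0 : At \ A0 = {(t, s(b, c)), (s, s(a, d))} := by
    ext x
    simp only [hAt, Finset.mem_sdiff, Finset.mem_union, Finset.mem_insert,
      Finset.mem_singleton]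
    constructor
    · rintro ⟨hx, hx0⟩
      rcases hx with ⟨hx0', -⟩ | h
      · exact absurd hx0' hx0
      · exact h
    · rintro (rfl | rfl)
      · exact ⟨Or.inr (Or.inl rfl), m2.2⟩
      · exact ⟨Or.inr (Or.inr rfl), h4n0⟩
  have hAtA1 : At \ A1
      = ((A0 \ A1) \ {(t, s(a, b)), (s, s(c, d))}) ∪ {(s, s(a, d))} := by
    ext x
    simp only [hAt, Finset.mem_sdiff, Finset.mem_union, Finset.mem_insert,
      Finset.mem_singleton]
    constructor
    · rintro ⟨⟨hx0, hne⟩ | h | h, hx1⟩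
      · exact Or.inl ⟨⟨hx0, hx1⟩, hne⟩
      · exact absurd (h ▸ m2.1) hx1
      · exact Or.inr h
    · rintro (⟨⟨hx0, hx1⟩, hne⟩ | rfl)
      · exact ⟨Or.inl ⟨hx0, hne⟩, hx1⟩
      · exact ⟨Or.inr (Or.inr rfl), h4n1⟩
  have hA1At : A1 \ At = (A1 \ A0) \ {(t, s(b, c))} := by
    ext x
    simp only [hAt, Finset.mem_sdiff, Finset.mem_union, Finset.mem_insert,
      Finset.mem_singleton]
    constructor
    · rintro ⟨hx1, hx⟩
      refine ⟨⟨hx1, fun hx0 => ?_⟩, fun h => hx (Or.inr (Or.inl h))⟩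
      exact hx (Or.inl ⟨hx0, fun h => h.elim (fun h' => m1.2 (h' ▸ hx1))
        (fun h' => m3.2 (h' ▸ hx1))⟩)
    · rintro ⟨⟨hx1, hx0⟩, hne⟩
      refine ⟨hx1, ?_⟩
      rintro (⟨hx0', -⟩ | h | h)
      · exact hx0 hx0'
      · exact hne h
      · exact h4n1 (h ▸ hx1)
  -- cardinalities of the pairs
  have c13 : ({(t, s(a, b)), (s, s(c, d))} : Finset (Hyperarc V)).card = 2 := by
    rw [Finset.card_insert_of_notMem (by simpa using hne13), Finset.card_singleton]
  have c24 : ({(t, s(b, c)), (s, s(a, d))} : Finset (Hyperarc V)).card = 2 := by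
    rw [Finset.card_insert_of_notMem (by simpa using hne24), Finset.card_singleton]
  have hSsub : ({(t, s(a, b)), (s, s(c, d))} : Finset (Hyperarc V)) ⊆ A0 \ A1 := by
    intro x hx
    simp only [Finset.mem_insert, Finset.mem_singleton] at hx
    rcases hx with rfl | rfl
    · exact Finset.mem_sdiff.mpr m1
    · exact Finset.mem_sdiff.mpr m3
  have hm0 : 2 ≤ (A0 \ A1).card := c13 ▸ Finset.card_le_card hSsub
  have hm1 : 1 ≤ (A1 \ A0).card :=
    Finset.card_pos.mpr ⟨(t, s(b, c)), Finset.mem_sdiff.mpr m2⟩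
  have hsum : (A0 \ A1).card + (A1 \ A0).card = k + 1 := by
    rw [← mEdges_card, hcard]
  refine ⟨?_, ?_, ?_⟩
  · -- Realizes At D
    refine ⟨?_, ?_, ?_⟩
    · intro e he
      rw [hAt] at he
      simp only [Finset.mem_union, Finset.mem_sdiff, Finset.mem_insert,
        Finset.mem_singleton] at he
      rcases he with ⟨he0, -⟩ | rfl | rfl
      · exact h0.1 e he0
      · exact h1.1 _ m2.1
      · exact fun h => had (Sym2.mk_isDiag_iff.mp h)
    · intro v
      rw [hAt, shuffle_filter_card A0 _ _ _ _ m1.1 m3.1 m2.2 h4n0 hne13 hne24]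
      · exact h0.2.1 v
      · simp only [Sym2.mem_iff]
        by_cases h1' : v = a <;> by_cases h2' : v = b <;> by_cases h3' : v = c <;>
          by_cases h4' : v = d <;> simp_all
    · intro t'
      rw [hAt, shuffle_filter_card A0 _ _ _ _ m1.1 m3.1 m2.2 h4n0 hne13 hne24]
      · exact h0.2.2 t'
      · simp
  · -- card mEdges A0 At ≤ k
    rw [mEdges_card, hA0At, hAtA0, c13, c24]
    omega
  · -- card mEdges At A1 = k - 1
    have hd : Disjoint ((A0 \ A1) \ {(t, s(a, b)), (s, s(c, d))})
        ({(s, s(a, d))} : Finset (Hyperarc V)) := by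
      rw [Finset.disjoint_left]
      intro y hy hy'
      simp only [Finset.mem_sdiff] at hy
      simp only [Finset.mem_singleton] at hy'
      exact h4n0 (hy' ▸ hy.1.1)
    rw [mEdges_card, hAtA1, hA1At, Finset.card_union_of_disjoint hd,
      Finset.card_sdiff_of_subset hSsub, c13, Finset.card_singleton,
      Finset.card_sdiff_of_subset (Finset.singleton_subset_iff.mpr (Finset.mem_sdiff.mpr m2)), Finset.card_singleton]
    omega
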